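/- Let f̂, f* : 𝒳 → [0,1]^k be probabilistic classifiers and let ŷ_x = argmax_j f̂_j(x), y*_x = argmax_j f*_j(x). Suppose that for all x, P_{Y|X=x}(Y ∈ {ŷ_x, y*_x}) ≥ 1 − δ₅ with δ₅ ∈ [0,1). Then E_{XY}[1{ŷ_X ≠ y*_X}] ≤ (1/(1−δ₅)) · E_{XY}[(1{ŷ_X ≠ Y} − 1{y*_X ≠ Y})²]. -/
import Mathlib


/-- If for every `x` the conditional mass of `{ŷ_x, y*_x}` is at least `1 - δ₅`, then the
expected disagreement indicator is bounded by `1/(1-δ₅)` times the expected squared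
indicator difference. -/
theorem disagreement_bound {𝒳 𝒴 : Type*} [Fintype 𝒳] [Fintype 𝒴] [DecidableEq 𝒴]
    (p : 𝒳 → 𝒴 → ℝ) (hp : ∀ x y, 0 ≤ p x y) (hsum : ∑ x, ∑ y, p x y = 1)
    (yhat ystar : 𝒳 → 𝒴) (δ₅ : ℝ) (hδ : δ₅ ∈ Set.Ico (0:ℝ) 1)
    (hcond : ∀ x, (1 - δ₅) * ∑ y, p x y ≤ ∑ y ∈ ({yhat x, ystar x} : Finset 𝒴), p x y) :
    ∑ x, ∑ y, p x y * (if yhat x ≠ ystar x then (1:ℝ) else 0) ≤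
      (1/(1-δ₅)) * ∑ x, ∑ y, p x y *
        ((if yhat x ≠ y then (1:ℝ) else 0) - (if ystar x ≠ y then (1:ℝ) else 0))^2 := by
  obtain ⟨hδ0, hδ1⟩ := hδ
  have h1 : (0:ℝ) < 1 - δ₅ := by linarith
  rw [one_div, le_inv_mul_iff₀ h1, Finset.mul_sum]
  apply Finset.sum_le_sum
  intro x _
  by_cases h : yhat x = ystar x
  · simp only [h, ne_eq, not_true_eq_false, if_neg, if_false, mul_zero,
      Finset.sum_const_zero, mul_zero]
    apply Finset.sum_nonneg
    intro y _
    exact mul_nonneg (hp x y) (sq_nonneg _)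
  · calc (1 - δ₅) * ∑ y, p x y * (if yhat x ≠ ystar x then (1:ℝ) else 0)
        = (1 - δ₅) * ∑ y, p x y := by simp [h]
      _ ≤ ∑ y ∈ ({yhat x, ystar x} : Finset 𝒴), p x y := hcond x
      _ = ∑ y ∈ ({yhat x, ystar x} : Finset 𝒴), p x y *
            ((if yhat x ≠ y then (1:ℝ) else 0) - (if ystar x ≠ y then (1:ℝ) else 0))^2 := by
          apply Finset.sum_congr rfl
          intro y hy
          simp only [Finset.mem_insert, Finset.mem_singleton] at hy
          rcases hy with rfl | rfl
          · simp [h, Ne.symm h]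
          · simp [h, Ne.symm h]
      _ ≤ ∑ y, p x y *
            ((if yhat x ≠ y then (1:ℝ) else 0) - (if ystar x ≠ y then (1:ℝ) else 0))^2 := by
          apply Finset.sum_le_sum_of_subset_of_nonneg (Finset.subset_univ _)
          intro y _ _
          exact mul_nonneg (hp x y) (sq_nonneg _)
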